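/- Let k ∈ ℤ₊ and let p⃗ = (p₁, ..., p_s) be a composition of k with all parts positive. Let σ ∈ S_k and suppose τ ∈ S_{(p₁, k-p₁)} (i.e., τ preserves the order inside the blocks [1,p₁] and [p₁+1,k]) with στ(p₁) = k, and τ' is a permutation preserving the order inside each block [p^1+1,p^2],...,[p^{s-1}+1,p^s] (where p^t = p₁+⋯+p_t) and fixing [1,p₁] pointwise, such that σττ' lies in S^{p⃗}. Then ττ' ∈ S_{p⃗} ∩ σ⁻¹S^{p⃗}. Conversely, every τ'' ∈ S_{p⃗} ∩ σ⁻¹S^{p⃗} admits a unique such factorization τ'' = ττ'. -/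

import Mathlib

open scoped BigOperators

/-- Partial sums `p^t = p₁ + ⋯ + p_t` of a composition (0-indexed: `Ps p t = ∑_{u<t} p u`). -/
def Ps (p : ℕ → ℕ) (t : ℕ) : ℕ := ∑ u ∈ Finset.range t, p u

/-- `σ` is strictly increasing on the positions in `[lo, hi)`. -/
def IncOn {k : ℕ} (σ : Equiv.Perm (Fin k)) (lo hi : ℕ) : Prop :=
  ∀ i j : Fin k, lo ≤ (i : ℕ) → (j : ℕ) < hi → (i : ℕ) < (j : ℕ) →
    ((σ i : Fin k) : ℕ) < ((σ j : Fin k) : ℕ)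

/-- `σ ∈ S_{p⃗}`: increasing on each block `[p^{t-1}, p^t)`. -/
def SP {k : ℕ} (p : ℕ → ℕ) (s : ℕ) (σ : Equiv.Perm (Fin k)) : Prop :=
  ∀ t < s, IncOn σ (Ps p t) (Ps p (t + 1))

/-- `γ ∈ S^{p⃗}`: the images of the block maxima are decreasing, and each block maximum
has the largest image within its block. -/
def SUpper {k : ℕ} (p : ℕ → ℕ) (s : ℕ) (γ : Equiv.Perm (Fin k)) : Prop :=
  (∀ t : ℕ, t + 1 < s → ∀ i j : Fin k,
      (i : ℕ) + 1 = Ps p (t + 1) → (j : ℕ) + 1 = Ps p (t + 2) →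
      ((γ j : Fin k) : ℕ) < ((γ i : Fin k) : ℕ)) ∧
  (∀ t < s, ∀ u i : Fin k, (i : ℕ) + 1 = Ps p (t + 1) →
      Ps p t ≤ (u : ℕ) → (u : ℕ) < Ps p (t + 1) →
      ((γ u : Fin k) : ℕ) ≤ ((γ i : Fin k) : ℕ))

/-- `τ ∈ S_{(p₁, k-p₁)}`: increasing on `[0,p₁)` and on `[p₁,k)`. -/
def CondTau {k : ℕ} (p : ℕ → ℕ) (τ : Equiv.Perm (Fin k)) : Prop :=
  IncOn τ 0 (p 0) ∧ IncOn τ (p 0) k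

/-- `τ'` fixes the first block pointwise and is increasing on each of the blocks
`[p^1, p^2), …, [p^{s-1}, p^s)`. -/
def CondTau' {k : ℕ} (p : ℕ → ℕ) (s : ℕ) (τ' : Equiv.Perm (Fin k)) : Prop :=
  (∀ i : Fin k, (i : ℕ) < p 0 → τ' i = i) ∧
  (∀ t : ℕ, 1 ≤ t → t < s → IncOn τ' (Ps p t) (Ps p (t + 1)))

lemma perm_apply_inv_self {α : Type*} (f : Equiv.Perm α) (x : α) : f (f⁻¹ x) = x :=
  Equiv.apply_symm_apply f x

lemma Ps_mono (p : ℕ → ℕ) : Monotone (Ps p) := fun a b hab =>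
  Finset.sum_le_sum_of_subset (Finset.range_subset_range.2 hab)

lemma Ps_one (p : ℕ → ℕ) : Ps p 1 = p 0 := by simp [Ps]

lemma Ps_zero (p : ℕ → ℕ) : Ps p 0 = 0 := by simp [Ps]

lemma exists_block (p : ℕ → ℕ) (s v : ℕ) (hv : v < Ps p s) :
    ∃ t < s, Ps p t ≤ v ∧ v < Ps p (t + 1) := by
  induction s with
  | zero => simp [Ps_zero] at hv
  | succ n ih =>
    by_cases h : v < Ps p n
    · obtain ⟨t, ht, h1, h2⟩ := ih h
      exact ⟨t, Nat.lt_succ_of_lt ht, h1, h2⟩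
    · exact ⟨n, Nat.lt_succ_self n, Nat.le_of_not_lt h, hv⟩

/-- If a permutation fixes everything below `c`, then it maps `[c,k)` into itself. -/
lemma fix_compl {k : ℕ} (τ : Equiv.Perm (Fin k)) (c : ℕ)
    (h : ∀ i : Fin k, (i : ℕ) < c → τ i = i) :
    ∀ a : Fin k, c ≤ (a : ℕ) → c ≤ ((τ a : Fin k) : ℕ) := by
  intro a ha
  by_contra hc
  push_neg at hc
  have h1 : τ (τ a) = τ a := h (τ a) hc
  have h2 : τ a = a := τ.injective h1
  rw [h2] at hc
  omega

/-- Chain of inequalities among block maxima. -/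
lemma chain {k s : ℕ} (p : ℕ → ℕ) (hsum : Ps p s = k) (γ : Equiv.Perm (Fin k))
    (hγ : SUpper p s γ) :
    ∀ t < s, ∀ j i : Fin k, (j : ℕ) + 1 = Ps p (t + 1) → (i : ℕ) + 1 = Ps p 1 →
      ((γ j : Fin k) : ℕ) ≤ ((γ i : Fin k) : ℕ) := by
  intro t
  induction t with
  | zero =>
    intro _ j i hj hi
    have hps : Ps p (0 + 1) = Ps p 1 := by norm_num
    have : j = i := Fin.ext (by omega)
    rw [this]
  | succ n ih =>
    intro ht j i hj hi
    have h1 : Ps p (n + 1) ≤ k := by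
      rw [← hsum]; exact Ps_mono p (by omega)
    have h2 : Ps p 1 ≤ Ps p (n + 1) := Ps_mono p (by omega)
    have hpos : 0 < Ps p (n + 1) := by omega
    have hm : (((⟨Ps p (n + 1) - 1, by omega⟩ : Fin k)) : ℕ) + 1 = Ps p (n + 1) := by
      simp; omega
    have hlt := hγ.1 n (by omega) ⟨Ps p (n + 1) - 1, by omega⟩ j hm hj
    have hle := ih (by omega) ⟨Ps p (n + 1) - 1, by omega⟩ i hm hi
    omega

/-- Under `SUpper`, the image of the first block maximum dominates everything. -/
lemma maxLem {k s : ℕ} (p : ℕ → ℕ) (hsum : Ps p s = k) (γ : Equiv.Perm (Fin k))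
    (hγ : SUpper p s γ) (v i : Fin k) (hi : (i : ℕ) + 1 = Ps p 1) :
    ((γ v : Fin k) : ℕ) ≤ ((γ i : Fin k) : ℕ) := by
  obtain ⟨t, ht, h1, h2⟩ := exists_block p s (v : ℕ) (by rw [hsum]; exact v.isLt)
  have hle : Ps p (t + 1) ≤ k := by rw [← hsum]; exact Ps_mono p ht
  have hm : (((⟨Ps p (t + 1) - 1, by omega⟩ : Fin k)) : ℕ) + 1 = Ps p (t + 1) := by
    simp; omega
  have hv := hγ.2 t ht v ⟨Ps p (t + 1) - 1, by omega⟩ hm h1 h2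
  have hc := chain p hsum γ hγ t ht ⟨Ps p (t + 1) - 1, by omega⟩ i hm hi
  omega

/-- Two permutations agreeing below `c` and both increasing on `[c,k)` are equal. -/
lemma perm_eq {k c : ℕ} (α β : Equiv.Perm (Fin k))
    (hab : ∀ i : Fin k, (i : ℕ) < c → α i = β i)
    (hα : IncOn α c k) (hβ : IncOn β c k) : α = β := by
  suffices h : ∀ n : ℕ, ∀ i : Fin k, (i : ℕ) = n → α i = β i by
    exact Equiv.ext fun i => h (i : ℕ) i rfl
  intro n
  induction n using Nat.strong_induction_on with
  | _ n ih =>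
    intro i hin
    by_cases hlow : (i : ℕ) < c
    · exact hab i hlow
    push_neg at hlow
    rcases lt_trichotomy ((α i : Fin k) : ℕ) ((β i : Fin k) : ℕ) with h1 | h1 | h1
    · exfalso
      have hm : β (β⁻¹ (α i)) = α i := perm_apply_inv_self β (α i)
      by_cases hmc : ((β⁻¹ (α i) : Fin k) : ℕ) < c
      · have he : α (β⁻¹ (α i)) = α i := (hab _ hmc).trans hm
        have := α.injective he
        rw [this] at hmc; omega
      push_neg at hmc
      rcases lt_trichotomy ((β⁻¹ (α i) : Fin k) : ℕ) (i : ℕ) with h2 | h2 | h2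
      · have hih := ih ((β⁻¹ (α i) : Fin k) : ℕ) (by omega) (β⁻¹ (α i)) rfl
        have he : α (β⁻¹ (α i)) = α i := hih.trans hm
        have := α.injective he
        rw [this] at h2; omega
      · have : β⁻¹ (α i) = i := Fin.ext h2
        rw [this] at hm
        have := congrArg Fin.val hm
        omega
      · have hlt := hβ i (β⁻¹ (α i)) hlow (Fin.isLt _) h2
        have := congrArg Fin.val hm
        omega
    · exact Fin.ext h1
    · exfalso
      have hm : α (α⁻¹ (β i)) = β i := perm_apply_inv_self α (β i)
      by_cases hmc : ((α⁻¹ (β i) : Fin k) : ℕ) < c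
      · have he : β (α⁻¹ (β i)) = β i := (hab _ hmc).symm.trans hm
        have := β.injective he
        rw [this] at hmc; omega
      push_neg at hmc
      rcases lt_trichotomy ((α⁻¹ (β i) : Fin k) : ℕ) (i : ℕ) with h2 | h2 | h2
      · have hih := ih ((α⁻¹ (β i) : Fin k) : ℕ) (by omega) (α⁻¹ (β i)) rfl
        have he : β (α⁻¹ (β i)) = β i := hih.symm.trans hm
        have := β.injective he
        rw [this] at h2; omega
      · have : α⁻¹ (β i) = i := Fin.ext h2
        rw [this] at hm
        have := congrArg Fin.val hm
        omega
      · have hlt := hα i (α⁻¹ (β i)) hlow (Fin.isLt _) h2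
        have := congrArg Fin.val hm
        omega

theorem stmt5 (k s : ℕ) (hk : 0 < k) (p : ℕ → ℕ) (hp : ∀ t < s, 0 < p t)
    (hsum : ∑ t ∈ Finset.range s, p t = k) (σ : Equiv.Perm (Fin k)) :
    (∀ τ τ' : Equiv.Perm (Fin k),
      CondTau p τ →
      (∀ i : Fin k, (i : ℕ) + 1 = p 0 → (((σ * τ) i : Fin k) : ℕ) + 1 = k) →
      CondTau' p s τ' →
      SUpper p s (σ * (τ * τ')) →
      SP p s (τ * τ')) ∧
    (∀ τ'' : Equiv.Perm (Fin k), SP p s τ'' → SUpper p s (σ * τ'') →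
      ∃! tp : Equiv.Perm (Fin k) × Equiv.Perm (Fin k),
        CondTau p tp.1 ∧
        (∀ i : Fin k, (i : ℕ) + 1 = p 0 → (((σ * tp.1) i : Fin k) : ℕ) + 1 = k) ∧
        CondTau' p s tp.2 ∧
        SUpper p s (σ * (tp.1 * tp.2)) ∧
        τ'' = tp.1 * tp.2) := by
  have hPs : Ps p s = k := hsum
  have hs : 0 < s := by
    rcases Nat.eq_zero_or_pos s with h | h
    · subst h; rw [Ps_zero] at hPs; omega
    · exact h
  have hp0 : 0 < p 0 := hp 0 hs
  have hp0k : p 0 ≤ k := by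
    have := Ps_mono p hs
    rw [Ps_one, hPs] at this
    exact this
  constructor
  · -- Part 1
    intro τ τ' hτ _hmax hτ' _hSU
    intro t ht i j hi hj hij
    by_cases h0 : t = 0
    · subst h0
      have hj' : (j : ℕ) < p 0 := by rw [← Ps_one p]; exact hj
      have hi' : (i : ℕ) < p 0 := by omega
      rw [Equiv.Perm.mul_apply, Equiv.Perm.mul_apply, hτ'.1 i hi', hτ'.1 j hj']
      exact hτ.1 i j (Nat.zero_le _) hj' hij
    · have h1t : 1 ≤ t := Nat.one_le_iff_ne_zero.2 h0
      have hp0i : p 0 ≤ (i : ℕ) := by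
        have := Ps_mono p h1t
        rw [Ps_one] at this; omega
      have hfixc := fix_compl τ' (p 0) hτ'.1
      have ha : p 0 ≤ ((τ' i : Fin k) : ℕ) := hfixc i hp0i
      have hinc := hτ'.2 t h1t ht i j hi hj hij
      rw [Equiv.Perm.mul_apply, Equiv.Perm.mul_apply]
      exact hτ.2 (τ' i) (τ' j) ha (Fin.isLt _) hinc
  · -- Part 2
    intro τ'' hSP hSU
    set f : Fin k → ℕ := fun i => if (i : ℕ) < p 0 then (i : ℕ) else k + ((τ'' i : Fin k) : ℕ)
      with hf
    set π := Tuple.sort f with hπdef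
    have hmono : Monotone (f ∘ π) := Tuple.monotone_sort f
    have hinj : Function.Injective f := by
      intro a b hab
      have ha := a.isLt
      have hb := b.isLt
      simp only [hf] at hab
      split_ifs at hab with h1 h2 h2
      · exact Fin.ext hab
      · omega
      · omega
      · exact τ''.injective (Fin.ext (by omega))
    have hsm : StrictMono (f ∘ π) := hmono.strictMono_of_injective (hinj.comp π.injective)
    have hge : ∀ i : Fin k, (i : ℕ) ≤ f (π i) := by
      have key : ∀ n : ℕ, ∀ h : n < k, n ≤ f (π ⟨n, h⟩) := by
        intro n
        induction n with
        | zero => intro h; exact Nat.zero_le _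
        | succ m ih =>
          intro h
          have hm : m < k := by omega
          have h1 : f (π ⟨m, hm⟩) < f (π ⟨m + 1, h⟩) := by
            exact hsm (by simp [Fin.lt_def])
          have := ih hm
          omega
      intro i
      exact key i.1 i.2
    have hfix : ∀ i : Fin k, (i : ℕ) < p 0 → π i = i := by
      have key : ∀ n : ℕ, ∀ i : Fin k, (i : ℕ) = n → (i : ℕ) < p 0 → π i = i := by
        intro n
        induction n using Nat.strong_induction_on with
        | _ n ih =>
          intro i hin hip
          have hfi : f i = (i : ℕ) := by simp [hf, hip]
          have h1 : ((π⁻¹ i : Fin k) : ℕ) ≤ (i : ℕ) := by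
            have h := hge (π⁻¹ i)
            rw [perm_apply_inv_self, hfi] at h
            exact h
          rcases lt_or_eq_of_le h1 with h2 | h2
          · exfalso
            have h3 := ih ((π⁻¹ i : Fin k) : ℕ) (by omega) (π⁻¹ i) rfl (by omega)
            rw [perm_apply_inv_self] at h3
            rw [← h3] at h2
            exact lt_irrefl _ h2
          · have h3 : π⁻¹ i = i := Fin.ext h2
            exact (Equiv.Perm.inv_eq_iff_eq.mp h3).symm
      intro i hip
      exact key (i : ℕ) i rfl hip
    have hout : ∀ a : Fin k, p 0 ≤ (a : ℕ) → p 0 ≤ ((π a : Fin k) : ℕ) :=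
      fix_compl π (p 0) hfix
    have hfixinv : ∀ i : Fin k, (i : ℕ) < p 0 → π⁻¹ i = i := by
      intro i hip
      exact Equiv.Perm.inv_eq_iff_eq.mpr (hfix i hip).symm
    have houtinv : ∀ a : Fin k, p 0 ≤ (a : ℕ) → p 0 ≤ ((π⁻¹ a : Fin k) : ℕ) :=
      fix_compl π⁻¹ (p 0) hfixinv
    have hhigh : ∀ a b : Fin k, p 0 ≤ (a : ℕ) → (a : ℕ) < (b : ℕ) →
        ((τ'' (π a) : Fin k) : ℕ) < ((τ'' (π b) : Fin k) : ℕ) := by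
      intro a b ha hab
      have h1 : f (π a) < f (π b) := hsm (Fin.lt_def.mpr hab)
      have ha' : p 0 ≤ ((π a : Fin k) : ℕ) := hout a ha
      have hb' : p 0 ≤ ((π b : Fin k) : ℕ) := hout b (by omega)
      simp only [hf] at h1
      rw [if_neg (by omega), if_neg (by omega)] at h1
      omega
    -- the candidate pair
    have hτlow : ∀ i : Fin k, (i : ℕ) < p 0 → (τ'' * π) i = τ'' i := by
      intro i hip
      rw [Equiv.Perm.mul_apply, hfix i hip]
    have hCT : CondTau p (τ'' * π) := by
      constructor
      · intro i j _ hj hij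
        rw [hτlow i (by omega), hτlow j hj]
        have h0 := hSP 0 hs
        rw [Ps_zero, Ps_one] at h0
        exact h0 i j (Nat.zero_le _) hj hij
      · intro i j hi _ hij
        rw [Equiv.Perm.mul_apply, Equiv.Perm.mul_apply]
        exact hhigh i j hi hij
    have hMax : ∀ i : Fin k, (i : ℕ) + 1 = p 0 →
        (((σ * (τ'' * π)) i : Fin k) : ℕ) + 1 = k := by
      intro i hi
      have h1 := maxLem p hPs (σ * τ'') hSU ((σ * τ'')⁻¹ ⟨k - 1, by omega⟩) i
        (by rw [Ps_one]; exact hi)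
      rw [perm_apply_inv_self] at h1
      simp only at h1
      have h2 : (((σ * (τ'' * π)) i : Fin k) : ℕ) = (((σ * τ'') i : Fin k) : ℕ) := by
        rw [show (σ * (τ'' * π)) i = σ ((τ'' * π) i) from rfl, hτlow i (by omega)]
        rfl
      have h3 := (((σ * τ'') i : Fin k)).isLt
      omega
    have hCT' : CondTau' p s π⁻¹ := by
      constructor
      · exact hfixinv
      · intro t h1t hts i j hi hj hij
        have hp0i : p 0 ≤ (i : ℕ) := by
          have := Ps_mono p h1t
          rw [Ps_one] at this; omega
        have ha : p 0 ≤ ((π⁻¹ i : Fin k) : ℕ) := houtinv i hp0i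
        have hb : p 0 ≤ ((π⁻¹ j : Fin k) : ℕ) := houtinv j (by omega)
        have hval := hSP t hts i j hi hj hij
        by_contra hc
        push_neg at hc
        rcases lt_or_eq_of_le hc with h2 | h2
        · have := hhigh (π⁻¹ j) (π⁻¹ i) hb h2
          rw [perm_apply_inv_self, perm_apply_inv_self] at this
          omega
        · have h3 : π⁻¹ j = π⁻¹ i := Fin.ext h2
          have h4 : j = i := (Equiv.injective π⁻¹) h3
          rw [h4] at hij
          omega
    have hcancel : τ'' * π * π⁻¹ = τ'' := mul_inv_cancel_right τ'' π
    refine ⟨(τ'' * π, π⁻¹), ⟨hCT, hMax, hCT', by rw [hcancel]; exact hSU, hcancel.symm⟩, ?_⟩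
    rintro ⟨α, α'⟩ ⟨hα, _hαmax, hα', _hSUα, heq⟩
    have hαeq : α = τ'' * π := by
      apply perm_eq (c := p 0)
      · intro i hip
        have h1 : τ'' i = α i := by
          rw [heq, Equiv.Perm.mul_apply, hα'.1 i hip]
        rw [← h1, hτlow i hip]
      · exact hα.2
      · exact hCT.2
    have hα'eq : α' = π⁻¹ := by
      have : α' = α⁻¹ * τ'' := by
        rw [heq]; group
      rw [this, hαeq]
      group
    simp [hαeq, hα'eq]
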